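/- Let |q| > 1 and A(z) = Σ_{m≥0} A_m z^m a convergent matrix power series with A_0 ∈ GL_n(ℂ) non-resonant (no two distinct eigenvalues of A_0 are congruent mod q^ℤ, and no q^m, m ≥ 1, is an eigenvalue of A_0 relative to itself in the sense that q^m λ ≠ μ for eigenvalues λ, μ). Then there exists a unique formal power series F = I_n + Σ_{m≥1} F_m z^m with F(qz)·A_0 = A(z)·F(z), and this series converges on a neighborhood of 0. -/

import Mathlib

open Filter Topology Polynomial
open scoped NNReal ENNReal Pointwise

set_option linter.unusedSectionVars false
set_option maxHeartbeats 1000000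

attribute [local instance] Matrix.linftyOpNormedAddCommGroup Matrix.linftyOpNormedRing
  Matrix.linftyOpNormedAlgebra

namespace GaugeAux

section Series

variable {E : Type*} [NormedRing E] [NormedAlgebra ℂ E] [CompleteSpace E]





noncomputable def pser (c : ℕ → E) : FormalMultilinearSeries ℂ ℂ E := fun m =>
  ContinuousMultilinearMap.mkPiRing ℂ (Fin m) (c m)

theorem hasFPS {c : ℕ → E} {K r : ℝ} (hr : 0 < r) (hc : ∀ m, ‖c m‖ ≤ K * r ^ m) :
    HasFPowerSeriesAt (fun z : ℂ => ∑' m, z ^ m • c m) (pser c) 0 := by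
  have hcoerc : ((Real.toNNReal r⁻¹ : ℝ≥0) : ℝ) = r⁻¹ := Real.coe_toNNReal _ (by positivity)
  have hrad : (Real.toNNReal r⁻¹ : ℝ≥0∞) ≤ (pser c).radius := by
    refine FormalMultilinearSeries.le_radius_of_bound _ K fun m => ?_
    have h1 : ‖pser c m‖ = ‖c m‖ := ContinuousMultilinearMap.norm_mkPiRing _
    rw [h1, hcoerc]
    calc ‖c m‖ * r⁻¹ ^ m ≤ K * r ^ m * r⁻¹ ^ m :=
          mul_le_mul_of_nonneg_right (hc m) (by positivity)
      _ = K * (r * r⁻¹) ^ m := by ring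
      _ = K := by rw [mul_inv_cancel₀ hr.ne', one_pow, mul_one]
  have hpos : 0 < (pser c).radius := by
    refine lt_of_lt_of_le ?_ hrad
    simp only [ENNReal.coe_pos, Real.toNNReal_pos]
    positivity
  have hball := (pser c).hasFPowerSeriesOnBall hpos
  have hsum : (pser c).sum = fun z : ℂ => ∑' m, z ^ m • c m := by
    funext z
    simp only [FormalMultilinearSeries.sum, pser, ContinuousMultilinearMap.mkPiRing_apply,
      Finset.prod_const, Finset.card_univ, Fintype.card_fin]
  rw [← hsum]
  exact hball.hasFPowerSeriesAt

theorem coeff_eq_zero {c : ℕ → E} {K r : ℝ} (hr : 0 < r) (hc : ∀ m, ‖c m‖ ≤ K * r ^ m)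
    (h0 : ∀ᶠ z in 𝓝 (0 : ℂ), ∑' m, z ^ m • c m = 0) : ∀ m, c m = 0 := by
  have hz := (hasFPS hr hc).eq_zero_of_eventually h0
  intro m
  have h1 : pser c m = 0 := by rw [hz]; rfl
  have h2 := congrArg (fun f : ContinuousMultilinearMap ℂ (fun _ : Fin m => ℂ) E =>
    f fun _ => (1 : ℂ)) h1
  simpa [pser, ContinuousMultilinearMap.mkPiRing_apply] using h2

theorem exists_repr {f : ℂ → E} (hf : AnalyticAt ℂ f 0) :
    ∃ (c : ℕ → E) (K r : ℝ), 0 < K ∧ 0 < r ∧ (∀ m, ‖c m‖ ≤ K * r ^ m) ∧ c 0 = f 0 ∧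
      ∀ᶠ z in 𝓝 (0 : ℂ), f z = ∑' m, z ^ m • c m := by
  obtain ⟨p, hp⟩ := hf
  obtain ⟨r', hr'0, hr'⟩ : ∃ r' : ℝ≥0, 0 < r' ∧ (r' : ℝ≥0∞) < p.radius := by
    obtain ⟨r', h1, h2⟩ := ENNReal.lt_iff_exists_nnreal_btwn.mp hp.radius_pos
    exact ⟨r', by exact_mod_cast h1, h2⟩
  obtain ⟨C, hC, hbound⟩ := p.norm_le_div_pow_of_pos_of_lt_radius hr'0 hr'
  have hc0 : p.coeff 0 = f 0 := hp.coeff_zero fun _ => (1 : ℂ)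
  obtain ⟨ε, hε⟩ := hp
  refine ⟨p.coeff, C, (r' : ℝ)⁻¹, hC, by positivity, fun m => ?_, hc0, ?_⟩
  · have h1 : ‖p.coeff m‖ ≤ ‖p m‖ := by
      have h2 := (p m).le_opNorm fun _ => (1 : ℂ)
      simp only [norm_one, Finset.prod_const, one_pow, mul_one] at h2
      exact h2
    calc ‖p.coeff m‖ ≤ ‖p m‖ := h1
      _ ≤ C / (r' : ℝ) ^ m := hbound m
      _ = C * ((r' : ℝ)⁻¹) ^ m := by rw [div_eq_mul_inv, inv_pow]
  · filter_upwards [EMetric.ball_mem_nhds (0 : ℂ) hε.r_pos] with z hz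
    have h3 := hε.sum hz
    rw [zero_add] at h3
    rw [h3]
    exact tsum_congr fun m => FormalMultilinearSeries.apply_eq_pow_smul_coeff





theorem summable_norm_pow_smul {c : ℕ → E} {K r : ℝ} (hr : 0 ≤ r)
    (hc : ∀ m, ‖c m‖ ≤ K * r ^ m) {z : ℂ} (hz : ‖z‖ * r < 1) :
    Summable fun m => ‖z ^ m • c m‖ := by
  refine Summable.of_nonneg_of_le (fun m => norm_nonneg _) (fun m => ?_)
    ((summable_geometric_of_lt_one (by positivity) hz).mul_left K)
  have h : ‖z ^ m • c m‖ = ‖z‖ ^ m * ‖c m‖ := by rw [norm_smul, norm_pow]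
  rw [h]
  calc ‖z‖ ^ m * ‖c m‖ ≤ ‖z‖ ^ m * (K * r ^ m) :=
        mul_le_mul_of_nonneg_left (hc m) (by positivity)
    _ = K * (‖z‖ * r) ^ m := by ring

/-- The coefficients of `z ↦ f₂(qz)·D - f₁(z)·f₂(z)`. -/
noncomputable def ccoef (q : ℂ) (D : E) (a b : ℕ → E) (m : ℕ) : E :=
  (q ^ m • b m) * D - ∑ kl ∈ Finset.HasAntidiagonal.antidiagonal m, a kl.1 * b kl.2

theorem bound1 {b : ℕ → E} {Kb rb : ℝ} (hb : ∀ m, ‖b m‖ ≤ Kb * rb ^ m)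
    (hrb : 0 ≤ rb) (q : ℂ) (D : E) (m : ℕ) :
    ‖(q ^ m • b m) * D‖ ≤ Kb * ‖D‖ * (‖q‖ * rb) ^ m := by
  calc ‖(q ^ m • b m) * D‖ ≤ ‖q ^ m • b m‖ * ‖D‖ := norm_mul_le _ _
    _ = ‖q‖ ^ m * ‖b m‖ * ‖D‖ := by rw [norm_smul, norm_pow]
    _ ≤ ‖q‖ ^ m * (Kb * rb ^ m) * ‖D‖ := by
        have := hb m
        have h0 : (0:ℝ) ≤ ‖q‖ ^ m := by positivity
        nlinarith [norm_nonneg D, mul_le_mul_of_nonneg_left (hb m) h0]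
    _ = Kb * ‖D‖ * (‖q‖ * rb) ^ m := by rw [mul_pow]; ring

theorem bound2 {a b : ℕ → E} {Ka ra Kb rb : ℝ} (ha : ∀ m, ‖a m‖ ≤ Ka * ra ^ m)
    (hb : ∀ m, ‖b m‖ ≤ Kb * rb ^ m) (hra : 0 ≤ ra) (hrb : 0 ≤ rb) (m : ℕ) :
    ‖∑ kl ∈ Finset.HasAntidiagonal.antidiagonal m, a kl.1 * b kl.2‖
      ≤ Ka * Kb * (2 * max ra rb) ^ m := by
  have hKa : 0 ≤ Ka := le_trans (norm_nonneg (a 0)) (by simpa using ha 0)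
  have hKb : 0 ≤ Kb := le_trans (norm_nonneg (b 0)) (by simpa using hb 0)
  set R := max ra rb with hR
  have hR0 : 0 ≤ R := le_trans hra (le_max_left _ _)
  have hterm : ∀ kl ∈ Finset.HasAntidiagonal.antidiagonal m, ‖a kl.1 * b kl.2‖ ≤ Ka * Kb * R ^ m := by
    intro kl hkl
    have hsum : kl.1 + kl.2 = m := Finset.HasAntidiagonal.mem_antidiagonal.mp hkl
    calc ‖a kl.1 * b kl.2‖ ≤ ‖a kl.1‖ * ‖b kl.2‖ := norm_mul_le _ _
      _ ≤ (Ka * R ^ kl.1) * (Kb * R ^ kl.2) := by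
          have h1 : ‖a kl.1‖ ≤ Ka * R ^ kl.1 :=
            (ha _).trans (by gcongr <;> first | exact hra | exact le_max_left _ _)
          have h2 : ‖b kl.2‖ ≤ Kb * R ^ kl.2 :=
            (hb _).trans (by gcongr <;> first | exact hrb | exact le_max_right _ _)
          exact mul_le_mul h1 h2 (norm_nonneg _) (by positivity)
      _ = Ka * Kb * R ^ m := by rw [← hsum, pow_add]; ring
  calc ‖∑ kl ∈ Finset.HasAntidiagonal.antidiagonal m, a kl.1 * b kl.2‖
      ≤ ∑ kl ∈ Finset.HasAntidiagonal.antidiagonal m, ‖a kl.1 * b kl.2‖ := norm_sum_le _ _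
    _ ≤ ∑ _kl ∈ Finset.HasAntidiagonal.antidiagonal m, Ka * Kb * R ^ m := Finset.sum_le_sum hterm
    _ = (m + 1) * (Ka * Kb * R ^ m) := by
        rw [Finset.sum_const, Finset.Nat.card_antidiagonal]; push_cast; ring
    _ ≤ 2 ^ m * (Ka * Kb * R ^ m) := by
        have h1 : (m : ℝ) + 1 ≤ 2 ^ m := by
          exact_mod_cast Nat.succ_le_of_lt (Nat.lt_two_pow_self (n := m))
        exact mul_le_mul_of_nonneg_right h1 (by positivity)
    _ = Ka * Kb * (2 * R) ^ m := by rw [mul_pow]; ring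


theorem ccoef_bound {a b : ℕ → E} {Ka ra Kb rb : ℝ} (ha : ∀ m, ‖a m‖ ≤ Ka * ra ^ m)
    (hb : ∀ m, ‖b m‖ ≤ Kb * rb ^ m) (hra : 0 ≤ ra) (hrb : 0 ≤ rb) (q : ℂ) (D : E) (m : ℕ) :
    ‖ccoef q D a b m‖ ≤ (Kb * ‖D‖ + Ka * Kb) * (max (‖q‖ * rb) (2 * max ra rb)) ^ m := by
  set r' := max (‖q‖ * rb) (2 * max ra rb) with hr'
  have h1 := bound1 hb hrb q D m
  have h2 := bound2 ha hb hra hrb m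
  have hKa : 0 ≤ Ka := le_trans (norm_nonneg (a 0)) (by simpa using ha 0)
  have hKb : 0 ≤ Kb := le_trans (norm_nonneg (b 0)) (by simpa using hb 0)
  have hq1 : (‖q‖ * rb) ^ m ≤ r' ^ m := pow_le_pow_left₀ (by positivity) (le_max_left _ _) _
  have hq2 : (2 * max ra rb) ^ m ≤ r' ^ m := pow_le_pow_left₀ (by positivity) (le_max_right _ _) _
  calc ‖ccoef q D a b m‖ ≤ ‖(q ^ m • b m) * D‖ + ‖∑ kl ∈ Finset.HasAntidiagonal.antidiagonal m, a kl.1 * b kl.2‖ :=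
        norm_sub_le _ _
    _ ≤ Kb * ‖D‖ * r' ^ m + Ka * Kb * r' ^ m := by
        refine add_le_add (h1.trans ?_) (h2.trans ?_)
        · exact mul_le_mul_of_nonneg_left hq1 (by positivity)
        · exact mul_le_mul_of_nonneg_left hq2 (by positivity)
    _ = (Kb * ‖D‖ + Ka * Kb) * r' ^ m := by ring

/-- The main representation: `f₂(qz)·D - f₁(z)·f₂(z)` as a power series with
coefficients `ccoef`. -/
theorem key_repr {a b : ℕ → E} {Ka ra Kb rb : ℝ} (hra : 0 < ra) (hrb : 0 < rb)
    (ha : ∀ m, ‖a m‖ ≤ Ka * ra ^ m) (hb : ∀ m, ‖b m‖ ≤ Kb * rb ^ m)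
    (q : ℂ) (D : E) (fa fb : ℂ → E)
    (hfa : ∀ᶠ z in 𝓝 (0 : ℂ), fa z = ∑' m, z ^ m • a m)
    (hfb : ∀ᶠ z in 𝓝 (0 : ℂ), fb z = ∑' m, z ^ m • b m) :
    ∀ᶠ z in 𝓝 (0 : ℂ), fb (q * z) * D - fa z * fb z = ∑' m, z ^ m • ccoef q D a b m := by
  have hqz : Tendsto (fun z : ℂ => q * z) (𝓝 0) (𝓝 0) := by
    have := (continuous_mul_left q).tendsto (0 : ℂ)
    simpa using this
  have hsmall : ∀ r : ℝ, ∀ᶠ z in 𝓝 (0 : ℂ), ‖z‖ * r < 1 := by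
    intro r
    have h : Tendsto (fun z : ℂ => ‖z‖ * r) (𝓝 0) (𝓝 (‖(0 : ℂ)‖ * r)) :=
      (continuous_norm.mul continuous_const).tendsto _
    simp only [norm_zero, zero_mul] at h
    exact h.eventually_lt_const one_pos
  filter_upwards [hfa, hfb, hqz.eventually hfb, hsmall ra, hsmall rb,
    hqz.eventually (hsmall rb), hsmall (max (‖q‖ * rb) (2 * max ra rb))]
    with z hfaz hfbz hfbqz hzra hzrb hqzrb hzr'
  -- summabilities
  have hsa : Summable fun m => ‖z ^ m • a m‖ := summable_norm_pow_smul hra.le ha hzra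
  have hsb : Summable fun m => ‖z ^ m • b m‖ := summable_norm_pow_smul hrb.le hb hzrb
  -- first piece : fb (q*z) * D
  have hterm1 : ∀ m : ℕ, ((q * z) ^ m • b m) * D = z ^ m • ((q ^ m • b m) * D) := by
    intro m
    rw [mul_pow, smul_mul_assoc, smul_mul_assoc, smul_smul, mul_comm (q ^ m) (z ^ m)]
  have hpiece1 : fb (q * z) * D = ∑' m, z ^ m • ((q ^ m • b m) * D) := by
    rw [hfbqz]
    rw [← Summable.tsum_mul_right D
      ((summable_norm_pow_smul hrb.le hb hqzrb).of_norm)]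
    exact tsum_congr hterm1
  -- second piece : fa z * fb z
  have hpiece2 : fa z * fb z
      = ∑' m, z ^ m • ∑ kl ∈ Finset.HasAntidiagonal.antidiagonal m, a kl.1 * b kl.2 := by
    rw [hfaz, hfbz, tsum_mul_tsum_eq_tsum_sum_antidiagonal_of_summable_norm hsa hsb]
    refine tsum_congr fun m => ?_
    rw [Finset.smul_sum]
    refine Finset.sum_congr rfl fun kl hkl => ?_
    have hsum : kl.1 + kl.2 = m := Finset.HasAntidiagonal.mem_antidiagonal.mp hkl
    rw [smul_mul_smul_comm, ← pow_add, hsum]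
  -- summabilities of the two coefficient pieces
  have hb1 : ∀ m, ‖(q ^ m • b m) * D‖ ≤ Kb * ‖D‖ * (max (‖q‖ * rb) (2 * max ra rb)) ^ m := by
    intro m
    refine (bound1 hb hrb.le q D m).trans ?_
    have hKb : 0 ≤ Kb := le_trans (norm_nonneg (b 0)) (by simpa using hb 0)
    exact mul_le_mul_of_nonneg_left
      (pow_le_pow_left₀ (by positivity) (le_max_left _ _) _) (by positivity)
  have hb2 : ∀ m, ‖∑ kl ∈ Finset.HasAntidiagonal.antidiagonal m, a kl.1 * b kl.2‖
      ≤ Ka * Kb * (max (‖q‖ * rb) (2 * max ra rb)) ^ m := by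
    intro m
    refine (bound2 ha hb hra.le hrb.le m).trans ?_
    have hKa : 0 ≤ Ka := le_trans (norm_nonneg (a 0)) (by simpa using ha 0)
    have hKb : 0 ≤ Kb := le_trans (norm_nonneg (b 0)) (by simpa using hb 0)
    exact mul_le_mul_of_nonneg_left
      (pow_le_pow_left₀ (by positivity) (le_max_right _ _) _) (by positivity)
  have hs1 : Summable fun m => z ^ m • ((q ^ m • b m) * D) :=
    (summable_norm_pow_smul (by positivity) hb1 hzr').of_norm
  have hs2 : Summable fun m => z ^ m • ∑ kl ∈ Finset.HasAntidiagonal.antidiagonal m, a kl.1 * b kl.2 :=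
    (summable_norm_pow_smul (by positivity) hb2 hzr').of_norm
  rw [hpiece1, hpiece2, ← Summable.tsum_sub hs1 hs2]
  refine tsum_congr fun m => ?_
  rw [ccoef, smul_sub]


end Series

section MatrixPart

variable {n : ℕ}



theorem mem_spectrum_of_root {M : Matrix (Fin n) (Fin n) ℂ} {μ : ℂ}
    (h : M.charpoly.eval μ = 0) : μ ∈ spectrum ℂ M := by
  rw [spectrum.mem_iff]
  intro hu
  rw [Matrix.isUnit_iff_isUnit_det, isUnit_iff_ne_zero] at hu
  apply hu
  have h1 : M.charpoly.eval μ = (algebraMap ℂ (Matrix (Fin n) (Fin n) ℂ) μ - M).det := by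
    rw [Matrix.charpoly, eval_det, Matrix.matPolyEquiv_charmatrix]
    congr 1
    rw [Polynomial.eval_sub, Polynomial.eval_X, Polynomial.eval_C]
    rfl
  rw [← h1, h]

theorem mul_pow_eq_pow_mul {M B D : Matrix (Fin n) (Fin n) ℂ} (hM : M * B = D * M) :
    ∀ k : ℕ, M * B ^ k = D ^ k * M := by
  intro k
  induction k with
  | zero => simp
  | succ k ih =>
    rw [pow_succ, ← mul_assoc, ih, mul_assoc, hM, ← mul_assoc, ← pow_succ]

theorem mul_aeval_eq_aeval_mul {M B D : Matrix (Fin n) (Fin n) ℂ} (hM : M * B = D * M)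
    (p : ℂ[X]) : M * Polynomial.aeval B p = Polynomial.aeval D p * M := by
  rw [Polynomial.aeval_eq_sum_range (p := p) B, Polynomial.aeval_eq_sum_range (p := p) D,
    Finset.mul_sum, Finset.sum_mul]
  refine Finset.sum_congr rfl fun k _ => ?_
  rw [mul_smul_comm, smul_mul_assoc, mul_pow_eq_pow_mul hM]

/-- Sylvester-type uniqueness: if the spectra of `B` and `D` are disjoint then
`M * B = D * M` forces `M = 0`. -/
theorem sylvester_eq_zero {M B D : Matrix (Fin n) (Fin n) ℂ}
    (hdisj : ∀ μ ∈ spectrum ℂ B, μ ∉ spectrum ℂ D) (hM : M * B = D * M) : M = 0 := by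
  have hCH : Polynomial.aeval D B.charpoly * M = 0 := by
    rw [← mul_aeval_eq_aeval_mul hM, Matrix.aeval_self_charpoly, mul_zero]
  have hu : IsUnit (Polynomial.aeval D B.charpoly) := by
    have hmonic := B.charpoly_monic
    have hsplits := IsAlgClosed.splits B.charpoly
    have hfact := hsplits.eq_prod_roots_of_monic hmonic
    set L := B.charpoly.roots.toList with hL
    have hprod : B.charpoly = (L.map fun a => X - Polynomial.C a).prod := by
      conv_lhs => rw [hfact]
      rw [hL, ← Multiset.prod_coe ((B.charpoly.roots.toList).map fun a => X - Polynomial.C a)]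
      congr 1
      rw [← Multiset.map_coe, Multiset.coe_toList]
    rw [hprod, map_list_prod (Polynomial.aeval D), List.map_map]
    refine List.prod_isUnit ?_
    intro x hx
    rw [List.mem_map] at hx
    obtain ⟨r, hr, rfl⟩ := hx
    simp only [Function.comp_apply]
    have hroot : B.charpoly.IsRoot r :=
      Polynomial.isRoot_of_mem_roots (Multiset.mem_toList.mp hr)
    have hrB : r ∈ spectrum ℂ B := mem_spectrum_of_root hroot
    have hrD := hdisj r hrB
    rw [spectrum.notMem_iff] at hrD
    have heq : (Polynomial.aeval D) (X - Polynomial.C r)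
        = -(algebraMap ℂ (Matrix (Fin n) (Fin n) ℂ) r - D) := by
      rw [map_sub, Polynomial.aeval_X, Polynomial.aeval_C, neg_sub]
    rw [heq]
    exact hrD.neg
  obtain ⟨u, hu_eq⟩ := hu
  have h2 : M = (↑u⁻¹ : Matrix (Fin n) (Fin n) ℂ) * (Polynomial.aeval D B.charpoly * M) := by
    rw [← hu_eq, ← mul_assoc, Units.inv_mul, one_mul]
  rw [hCH, mul_zero] at h2
  exact h2




theorem analyticAt_of_entries {f : ℂ → Matrix (Fin n) (Fin n) ℂ}
    (hf : ∀ i j, AnalyticAt ℂ (fun z => f z i j) 0) : AnalyticAt ℂ f 0 := by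
  have hrepr : f = fun z => ∑ i : Fin n, ∑ j : Fin n,
      (f z i j) • Matrix.single i j (1 : ℂ) := by
    funext z
    conv_lhs => rw [Matrix.matrix_eq_sum_single (f z)]
    refine Finset.sum_congr rfl fun i _ => Finset.sum_congr rfl fun j _ => ?_
    rw [Matrix.smul_single, smul_eq_mul, mul_one]
  rw [hrepr]
  refine Finset.analyticAt_fun_sum _ fun i _ => Finset.analyticAt_fun_sum _ fun j _ => ?_
  exact (hf i j).smul analyticAt_const

/-- The entry evaluation, as a linear map. -/
def entryLM (i j : Fin n) : Matrix (Fin n) (Fin n) ℂ →ₗ[ℂ] ℂ where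
  toFun M := M i j
  map_add' _ _ := rfl
  map_smul' _ _ := rfl

theorem analyticAt_entry {f : ℂ → Matrix (Fin n) (Fin n) ℂ} (hf : AnalyticAt ℂ f 0)
    (i j : Fin n) : AnalyticAt ℂ (fun z => f z i j) 0 := by
  have h := ((LinearMap.toContinuousLinearMap (entryLM i j)).analyticAt (f 0)).comp hf
  exact h.congr (Filter.Eventually.of_forall fun z => rfl)

/-- Injectivity of the Sylvester-type operator `M ↦ M * (q^m • A₀) - A₀ * M` coming
from the non-resonance condition. -/
theorem phi_inj {q : ℂ} (hq : 1 < ‖q‖) {A0 : Matrix (Fin n) (Fin n) ℂ}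
    (hnr : ∀ m : ℤ, m ≠ 0 → ∀ lam ∈ spectrum ℂ A0, ∀ mu ∈ spectrum ℂ A0,
      q ^ m * lam ≠ mu)
    {m : ℕ} (hm : 1 ≤ m) {M : Matrix (Fin n) (Fin n) ℂ}
    (h : M * (q ^ m • A0) - A0 * M = 0) : M = 0 := by
  have hq0 : q ≠ 0 := fun h0 => by simp [h0] at hq; linarith
  have hqm : q ^ m ≠ 0 := pow_ne_zero _ hq0
  refine sylvester_eq_zero (B := q ^ m • A0) (D := A0) ?_ (by rwa [sub_eq_zero] at h)
  intro μ hμ hμ'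
  set u : ℂˣ := Units.mk0 (q ^ m) hqm with hu
  have hspec : spectrum ℂ ((q ^ m : ℂ) • A0) = u • spectrum ℂ A0 := by
    have := spectrum.unit_smul_eq_smul A0 u
    rw [← this]
    rfl
  rw [hspec] at hμ
  obtain ⟨lam, hlam, hlameq⟩ := hμ
  refine hnr (m : ℤ) (Int.natCast_ne_zero.mpr (by omega)) lam hlam μ hμ' ?_
  rw [zpow_natCast]
  rw [← hlameq]
  rfl


end MatrixPart

/-- The recursively defined coefficients of the gauge transformation. -/
noncomputable def gaugeCoef {E : Type*} [Ring E] (inv : ℕ → E → E) (Ac : ℕ → E) : ℕ → E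
  | 0 => 1
  | (m + 1) => inv (m + 1) (∑ k ∈ Finset.range (m + 1), Ac (k + 1) * gaugeCoef inv Ac (m - k))
  termination_by m => m
  decreasing_by omega

end GaugeAux

open GaugeAux

/-- Existence, uniqueness and convergence of the gauge transformation to constant
coefficients.  Let `|q| > 1` and `A` be (entrywise) analytic at `0` with `A(0)`
invertible and non-resonant (`q^m λ ≠ μ` for all `m ∈ ℤ \ {0}` and eigenvalues `λ, μ` of
`A(0)`).  Then there is an analytic-at-`0` matrix function `F` with `F(0) = I` and
`F(qz)·A(0) = A(z)·F(z)` near `0`, unique as a germ at `0` (equivalently, the formal power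
series solution is unique and converges). -/
theorem gauge_to_constant_coefficients (n : ℕ) (q : ℂ) (hq : 1 < ‖q‖)
    (A : ℂ → Matrix (Fin n) (Fin n) ℂ)
    (hA : ∀ i j, AnalyticAt ℂ (fun z => A z i j) 0)
    (hA0 : IsUnit (A 0))
    (hnr : ∀ m : ℤ, m ≠ 0 → ∀ lam ∈ spectrum ℂ (A 0), ∀ mu ∈ spectrum ℂ (A 0),
      q ^ m * lam ≠ mu) :
    ∃ F : ℂ → Matrix (Fin n) (Fin n) ℂ,
      (∀ i j, AnalyticAt ℂ (fun z => F z i j) 0) ∧ F 0 = 1 ∧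
      (∀ᶠ z in 𝓝 (0 : ℂ), F (q * z) * A 0 = A z * F z) ∧
      ∀ G : ℂ → Matrix (Fin n) (Fin n) ℂ,
        (∀ i j, AnalyticAt ℂ (fun z => G z i j) 0) → G 0 = 1 →
        (∀ᶠ z in 𝓝 (0 : ℂ), G (q * z) * A 0 = A z * G z) →
        F =ᶠ[𝓝 (0 : ℂ)] G := by
  classical
  have hq' : 1 < ‖q‖ := by exact hq
  -- A as a matrix-valued analytic function, and its coefficients
  have hAE : AnalyticAt ℂ A 0 := analyticAt_of_entries hA
  obtain ⟨Ac, Ka, ra, hKa, hra, hAbd, hAc0, hArep⟩ := exists_repr hAE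
  -- the Sylvester operators
  set φL : ℕ → Matrix (Fin n) (Fin n) ℂ →ₗ[ℂ] Matrix (Fin n) (Fin n) ℂ :=
    fun m => LinearMap.mulRight ℂ (q ^ m • A 0) - LinearMap.mulLeft ℂ (A 0) with hφLdef
  have hφL : ∀ m M, φL m M = M * (q ^ m • A 0) - A 0 * M := fun m M => rfl
  have hbij : ∀ m, 1 ≤ m → Function.Bijective (φL m) := by
    intro m hm
    have hinj : Function.Injective (φL m) := by
      intro x y hxy
      have h0 : φL m (x - y) = 0 := by rw [map_sub, hxy, sub_self]
      rw [hφL] at h0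
      exact sub_eq_zero.mp (phi_inj hq' hnr hm h0)
    exact ⟨hinj, LinearMap.injective_iff_surjective.mp hinj⟩
  set inv : ℕ → Matrix (Fin n) (Fin n) ℂ → Matrix (Fin n) (Fin n) ℂ :=
    fun m => Function.invFun (φL m) with hinvdef
  have hinv : ∀ m, 1 ≤ m → ∀ x, φL m (inv m x) = x := fun m hm x =>
    Function.rightInverse_invFun (hbij m hm).2 x
  -- continuous linear versions, for norm bounds
  set invL : ℕ → Matrix (Fin n) (Fin n) ℂ →L[ℂ] Matrix (Fin n) (Fin n) ℂ :=
    fun m => if h : Function.Bijective (φL m) then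
      LinearMap.toContinuousLinearMap (LinearEquiv.ofBijective (φL m) h).symm.toLinearMap
      else 0 with hinvLdef
  have hinvL : ∀ m, 1 ≤ m → ∀ x, inv m x = invL m x := by
    intro m hm x
    have hb := hbij m hm
    rw [hinvLdef]
    simp only [dif_pos hb, LinearMap.coe_toContinuousLinearMap', LinearEquiv.coe_coe]
    refine hb.1 ?_
    rw [hinv m hm x]
    exact ((LinearEquiv.ofBijective (φL m) hb).apply_symm_apply x).symm
  -- the uniform bound on the inverses
  obtain ⟨u, hu⟩ := hA0
  set B := (↑u⁻¹ : Matrix (Fin n) (Fin n) ℂ) with hBdef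
  have hAB : A 0 * B = 1 := by rw [← hu]; exact_mod_cast u.mul_inv
  obtain ⟨m₀, hm₀⟩ : ∃ m₀ : ℕ, ∀ m ≥ m₀, 2 * (‖A 0‖ * ‖B‖) ≤ ‖q‖ ^ m :=
    eventually_atTop.mp ((tendsto_pow_atTop_atTop_of_one_lt hq').eventually_ge_atTop _)
  letI : NormedAddCommGroup (Matrix (Fin n) (Fin n) ℂ →L[ℂ] Matrix (Fin n) (Fin n) ℂ) :=
    ContinuousLinearMap.toNormedAddCommGroup
  set K : ℝ := 2 * ‖B‖ + ∑ k ∈ Finset.range m₀, ‖invL k‖ with hKdef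
  have hsumnn : (0:ℝ) ≤ ∑ k ∈ Finset.range m₀, ‖invL k‖ :=
    Finset.sum_nonneg fun i _ => norm_nonneg _
  have hK0 : 0 ≤ K := by positivity
  have hKbound : ∀ m, 1 ≤ m → ∀ x, ‖inv m x‖ ≤ K * ‖x‖ := by
    intro m hm x
    rw [hinvL m hm x]
    by_cases hcase : m < m₀
    · calc ‖invL m x‖ ≤ ‖invL m‖ * ‖x‖ := (invL m).le_opNorm x
        _ ≤ K * ‖x‖ := by
          refine mul_le_mul_of_nonneg_right ?_ (norm_nonneg x)
          refine le_trans (Finset.single_le_sum (fun i _ => norm_nonneg (invL i))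
            (Finset.mem_range.mpr hcase)) ?_
          rw [hKdef]
          nlinarith [norm_nonneg B]
    · set y := invL m x with hydef
      have hy : φL m y = x := by rw [hydef, ← hinvL m hm x]; exact hinv m hm x
      rw [hφL] at hy
      have hy' : y * (q ^ m • A 0) = x + A 0 * y := by
        rw [sub_eq_iff_eq_add] at hy; rw [hy]
      have h2 : (q ^ m : ℂ) • y = (x + A 0 * y) * B := by
        calc (q ^ m : ℂ) • y = (q ^ m • (y * A 0)) * B := by
              rw [smul_mul_assoc, mul_assoc, hAB, mul_one]
          _ = (y * (q ^ m • A 0)) * B := by rw [mul_smul_comm]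
          _ = (x + A 0 * y) * B := by rw [hy']
      have hnorm : ‖q‖ ^ m * ‖y‖ ≤ (‖x‖ + ‖A 0‖ * ‖y‖) * ‖B‖ := by
        have h3 : ‖(q ^ m : ℂ) • y‖ = ‖q‖ ^ m * ‖y‖ := by rw [norm_smul, norm_pow]
        rw [← h3, h2]
        calc ‖(x + A 0 * y) * B‖ ≤ ‖x + A 0 * y‖ * ‖B‖ := norm_mul_le _ _
          _ ≤ (‖x‖ + ‖A 0‖ * ‖y‖) * ‖B‖ :=
            mul_le_mul_of_nonneg_right
              ((norm_add_le _ _).trans (add_le_add_right (norm_mul_le _ _) _)) (norm_nonneg _)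
      have hqm1 : 1 ≤ ‖q‖ ^ m := one_le_pow₀ hq'.le
      have hqm2 : 2 * (‖A 0‖ * ‖B‖) ≤ ‖q‖ ^ m := hm₀ m (le_of_not_gt hcase)
      have hs1 : 2 * (‖A 0‖ * ‖B‖) * ‖y‖ ≤ ‖q‖ ^ m * ‖y‖ :=
        mul_le_mul_of_nonneg_right hqm2 (norm_nonneg y)
      have hs2 : 1 * ‖y‖ ≤ ‖q‖ ^ m * ‖y‖ := mul_le_mul_of_nonneg_right hqm1 (norm_nonneg y)
      rw [hKdef]
      nlinarith [norm_nonneg y, norm_nonneg x, norm_nonneg B, norm_nonneg (A 0), hsumnn,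
        mul_nonneg hsumnn (norm_nonneg x)]
  -- the coefficients of F
  set Fc : ℕ → Matrix (Fin n) (Fin n) ℂ := gaugeCoef inv Ac with hFcdef
  have hFc0 : Fc 0 = 1 := by rw [hFcdef, gaugeCoef]
  have hFcrec : ∀ m, Fc (m + 1)
      = inv (m + 1) (∑ k ∈ Finset.range (m + 1), Ac (k + 1) * Fc (m - k)) := by
    intro m; rw [hFcdef]; rw [gaugeCoef]
  -- geometric bound for Fc
  set C1 : ℝ := max 1 ‖(1 : Matrix (Fin n) (Fin n) ℂ)‖ with hC1def
  have hC1pos : 0 < C1 := lt_of_lt_of_le one_pos (le_max_left _ _)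
  set τ : ℝ := 2 * ra * (1 + K * Ka) with hτdef
  have hKKa : 0 ≤ K * Ka := mul_nonneg hK0 hKa.le
  have hτpos : 0 < τ := by rw [hτdef]; nlinarith
  have hraτ : ra ≤ τ / 2 := by
    have h8 : τ / 2 = ra * (1 + K * Ka) := by rw [hτdef]; ring
    rw [h8]; nlinarith
  have hFbd : ∀ m, ‖Fc m‖ ≤ C1 * τ ^ m := by
    intro m
    induction m using Nat.strong_induction_on with
    | _ m ih =>
      rcases m with _ | m
      · rw [hFc0, pow_zero, mul_one]; exact le_max_right _ _
      · rw [hFcrec m]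
        refine (hKbound (m + 1) (by omega) _).trans ?_
        have hsumbd : ‖∑ k ∈ Finset.range (m + 1), Ac (k + 1) * Fc (m - k)‖
            ≤ Ka * ra * C1 * τ ^ m * 2 := by
          calc ‖∑ k ∈ Finset.range (m + 1), Ac (k + 1) * Fc (m - k)‖
              ≤ ∑ k ∈ Finset.range (m + 1), ‖Ac (k + 1) * Fc (m - k)‖ := norm_sum_le _ _
            _ ≤ ∑ k ∈ Finset.range (m + 1), Ka * ra * C1 * τ ^ m * (1 / 2) ^ k := by
                refine Finset.sum_le_sum fun k hk => ?_
                have hk' : k < m + 1 := Finset.mem_range.mp hk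
                have hIH : ‖Fc (m - k)‖ ≤ C1 * τ ^ (m - k) := ih (m - k) (by omega)
                calc ‖Ac (k + 1) * Fc (m - k)‖ ≤ ‖Ac (k + 1)‖ * ‖Fc (m - k)‖ :=
                      norm_mul_le _ _
                  _ ≤ (Ka * ra ^ (k + 1)) * (C1 * τ ^ (m - k)) :=
                      mul_le_mul (hAbd (k + 1)) hIH (norm_nonneg _) (by positivity)
                  _ ≤ Ka * ra * C1 * τ ^ m * (1 / 2) ^ k := by
                      have hpow : ra ^ k * τ ^ (m - k) ≤ (1 / 2) ^ k * τ ^ m := by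
                        have h5 : ra ^ k ≤ (τ / 2) ^ k := pow_le_pow_left₀ hra.le hraτ k
                        have h6 : (τ / 2) ^ k = (1 / 2) ^ k * τ ^ k := by
                          rw [div_pow, div_pow]; ring
                        have h7 : τ ^ k * τ ^ (m - k) = τ ^ m := by
                          rw [← pow_add]; congr 1; omega
                        calc ra ^ k * τ ^ (m - k) ≤ (τ / 2) ^ k * τ ^ (m - k) :=
                              mul_le_mul_of_nonneg_right h5 (by positivity)
                          _ = (1 / 2) ^ k * (τ ^ k * τ ^ (m - k)) := by rw [h6]; ring
                          _ = (1 / 2) ^ k * τ ^ m := by rw [h7]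
                      calc (Ka * ra ^ (k + 1)) * (C1 * τ ^ (m - k))
                          = (Ka * ra * C1) * (ra ^ k * τ ^ (m - k)) := by ring
                        _ ≤ (Ka * ra * C1) * ((1 / 2) ^ k * τ ^ m) := by
                            refine mul_le_mul_of_nonneg_left hpow (by positivity)
                        _ = Ka * ra * C1 * τ ^ m * (1 / 2) ^ k := by ring
            _ = Ka * ra * C1 * τ ^ m * ∑ k ∈ Finset.range (m + 1), (1 / 2 : ℝ) ^ k := by
                rw [← Finset.mul_sum]
            _ ≤ Ka * ra * C1 * τ ^ m * 2 := by
                refine mul_le_mul_of_nonneg_left (sum_geometric_two_le _) (by positivity)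
        calc K * ‖∑ k ∈ Finset.range (m + 1), Ac (k + 1) * Fc (m - k)‖
            ≤ K * (Ka * ra * C1 * τ ^ m * 2) :=
              mul_le_mul_of_nonneg_left hsumbd hK0
          _ = (2 * ra * (K * Ka)) * (C1 * τ ^ m) := by ring
          _ ≤ τ * (C1 * τ ^ m) := by
              refine mul_le_mul_of_nonneg_right ?_ (by positivity)
              rw [hτdef]; nlinarith
          _ = C1 * τ ^ (m + 1) := by ring
  -- the key coefficient identity for Fc
  have hstar : ∀ m, (q ^ m • Fc m) * A 0
      = ∑ kl ∈ Finset.HasAntidiagonal.antidiagonal m, Ac kl.1 * Fc kl.2 := by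
    intro m
    rcases m with _ | m
    · rw [Finset.Nat.antidiagonal_zero, Finset.sum_singleton]
      simp [hFc0, hAc0]
    · have h1 := hinv (m + 1) (by omega)
        (∑ k ∈ Finset.range (m + 1), Ac (k + 1) * Fc (m - k))
      rw [← hFcrec m, hφL] at h1
      have h2 : (q ^ (m + 1) • Fc (m + 1)) * A 0 = Fc (m + 1) * (q ^ (m + 1) • A 0) := by
        rw [smul_mul_assoc, mul_smul_comm]
      rw [h2]
      rw [Finset.Nat.sum_antidiagonal_eq_sum_range_succ (fun k l => Ac k * Fc l) (m + 1),
        Finset.sum_range_succ' (fun k => Ac k * Fc (m + 1 - k)) (m + 1)]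
      simp only [Nat.succ_sub_succ_eq_sub, Nat.sub_self, Nat.sub_zero]
      rw [hAc0]
      have h3 : Fc (m + 1) * (q ^ (m + 1) • A 0)
          = (∑ k ∈ Finset.range (m + 1), Ac (k + 1) * Fc (m - k)) + A 0 * Fc (m + 1) := by
        rw [← h1]; abel
      rw [h3]
  -- define F
  set F : ℂ → Matrix (Fin n) (Fin n) ℂ := fun z => ∑' m, z ^ m • Fc m with hFdef
  have hFfps := hasFPS hτpos hFbd
  change HasFPowerSeriesAt F (pser Fc) 0 at hFfps
  have hFrep : ∀ᶠ z in 𝓝 (0 : ℂ), F z = ∑' m, z ^ m • Fc m :=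
    Eventually.of_forall fun z => rfl
  refine ⟨F, fun i j => analyticAt_entry hFfps.analyticAt i j, ?_, ?_, ?_⟩
  · -- F 0 = 1
    rw [hFdef]
    simp only
    rw [tsum_eq_single 0 fun m hm => by rw [zero_pow hm, zero_smul]]
    rw [pow_zero, one_smul, hFc0]
  · -- the functional equation
    have hkey := key_repr hra hτpos hAbd hFbd q (A 0) A F hArep hFrep
    filter_upwards [hkey] with z hz
    have hzero : ∀ m, ccoef q (A 0) Ac Fc m = 0 := by
      intro m
      rw [ccoef, sub_eq_zero]
      exact hstar m
    rw [← sub_eq_zero, hz]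
    simp only [hzero, smul_zero]
    exact tsum_zero
  · -- uniqueness
    intro G hGa hG0 hGeq
    have hGE : AnalyticAt ℂ G 0 := analyticAt_of_entries hGa
    obtain ⟨Gc, Kg, rg, hKg, hrg, hGbd, hGc0', hGrep⟩ := exists_repr hGE
    have hGc0 : Gc 0 = 1 := by rw [hGc0', hG0]
    have hkeyG := key_repr hra hrg hAbd hGbd q (A 0) A G hArep hGrep
    have h0 : ∀ᶠ z in 𝓝 (0 : ℂ), ∑' m, z ^ m • ccoef q (A 0) Ac Gc m = 0 := by
      filter_upwards [hkeyG, hGeq] with z h1 h2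
      rw [h2, sub_self] at h1; exact h1.symm
    have hrc : (0:ℝ) < max (‖q‖ * rg) (2 * max ra rg) := by
      refine lt_of_lt_of_le ?_ (le_max_right _ _)
      have : ra ≤ max ra rg := le_max_left _ _
      nlinarith
    have hccoef := coeff_eq_zero hrc (ccoef_bound hAbd hGbd hra.le hrg.le q (A 0)) h0
    have hGstar : ∀ m, (q ^ m • Gc m) * A 0
        = ∑ kl ∈ Finset.HasAntidiagonal.antidiagonal m, Ac kl.1 * Gc kl.2 := by
      intro m
      have := hccoef m
      rw [ccoef, sub_eq_zero] at this
      exact this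
    -- Gc = Fc by strong induction
    have hGF : ∀ m, Gc m = Fc m := by
      intro m
      induction m using Nat.strong_induction_on with
      | _ m ih =>
        rcases m with _ | m
        · rw [hGc0, hFc0]
        · have hFs := hstar (m + 1)
          have hGs := hGstar (m + 1)
          have hsub : (q ^ (m + 1) • (Gc (m + 1) - Fc (m + 1))) * A 0
              = A 0 * (Gc (m + 1) - Fc (m + 1)) := by
            have h4 : ∑ kl ∈ Finset.HasAntidiagonal.antidiagonal (m + 1), Ac kl.1 * Gc kl.2
                - ∑ kl ∈ Finset.HasAntidiagonal.antidiagonal (m + 1), Ac kl.1 * Fc kl.2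
                = A 0 * (Gc (m + 1) - Fc (m + 1)) := by
              rw [Finset.Nat.sum_antidiagonal_eq_sum_range_succ (fun k l => Ac k * Gc l) (m + 1),
                Finset.Nat.sum_antidiagonal_eq_sum_range_succ (fun k l => Ac k * Fc l) (m + 1),
                Finset.sum_range_succ' (fun k => Ac k * Gc (m + 1 - k)) (m + 1),
                Finset.sum_range_succ' (fun k => Ac k * Fc (m + 1 - k)) (m + 1)]
              simp only [Nat.succ_sub_succ_eq_sub, Nat.sub_self]
              have h5 : ∀ k ∈ Finset.range (m + 1),
                  Ac (k + 1) * Gc (m - k) = Ac (k + 1) * Fc (m - k) := by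
                intro k hk
                rw [ih (m - k) (by omega)]
              rw [Finset.sum_congr rfl h5, hAc0, mul_sub]
              simp only [Nat.sub_zero]
              abel
            rw [smul_sub, sub_mul, ← h4, hGs, hFs]
          set D := Gc (m + 1) - Fc (m + 1) with hDdef
          have h6 : D * (q ^ (m + 1) • A 0) - A 0 * D = 0 := by
            rw [mul_smul_comm, ← smul_mul_assoc, hsub, sub_self]
          have h7 : D = 0 := phi_inj hq' hnr (by omega) h6
          have := sub_eq_zero.mp (hDdef ▸ h7)
          exact this
    filter_upwards [hGrep] with z hz
    rw [hz]
    exact tsum_congr fun m => by rw [hGF m]
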